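/- Let f(w) = (1/3)(w+3−√(3+w²))/(w+1) for complex w ≠ −1 with 3+w² not a nonpositive real number, and f(−1) = 1/2. Then f is analytic (differentiable) on D = ℂ \ {w : Re w = 0 and |Im w| ≥ √3}, and lim_{w→−1} (1/3)(w+3−√(3+w²))/(w+1) = 1/2. -/

import Mathlib

noncomputable def csqrt (z : ℂ) : ℂ := z ^ (1 / 2 : ℂ)

lemma slit_cond {w : ℂ} (hw : ¬(w.re = 0 ∧ Real.sqrt 3 ≤ |w.im|)) :
    0 < (3 + w ^ 2).re ∨ (3 + w ^ 2).im ≠ 0 := by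
  have hre : (3 + w ^ 2).re = 3 + (w.re ^ 2 - w.im ^ 2) := by
    simp [pow_two, Complex.mul_re]; try ring
  have him : (3 + w ^ 2).im = 2 * w.re * w.im := by
    simp [pow_two, Complex.mul_im]; try ring
  by_cases ha : w.re = 0
  · left
    push_neg at hw
    have h1 : |w.im| < Real.sqrt 3 := hw ha
    have h3 : Real.sqrt 3 ^ 2 = 3 := Real.sq_sqrt (by norm_num)
    have h2 : w.im ^ 2 < 3 := by
      nlinarith [sq_abs w.im, abs_nonneg w.im, Real.sqrt_nonneg 3]
    rw [hre, ha]; nlinarith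
  · by_cases hb : w.im = 0
    · left; rw [hre, hb]; nlinarith [sq_nonneg w.re]
    · right; rw [him]
      simp only [ne_eq, mul_eq_zero, not_or]
      exact ⟨⟨by norm_num, ha⟩, hb⟩

lemma sq_csqrt {z : ℂ} (hz : z ≠ 0) : csqrt z ^ 2 = z := by
  have := Complex.cpow_nat_inv_pow z (two_ne_zero (α := ℕ))
  simpa [csqrt, one_div] using this

lemma csqrt_four : csqrt 4 = 2 := by
  have h := Complex.ofReal_cpow (by norm_num : (0:ℝ) ≤ 4) (1/2)
  have h2 : (4:ℝ) ^ ((1:ℝ)/2) = 2 := by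
    rw [show ((4:ℝ) ^ ((1:ℝ)/2)) = (4:ℝ) ^ ((1:ℝ)/2 : ℝ) from rfl, ← Real.sqrt_eq_rpow]
    rw [show (4:ℝ) = 2^2 by norm_num, Real.sqrt_sq (by norm_num)]
  rw [csqrt, show ((1:ℂ)/2) = (((1:ℝ)/2 : ℝ):ℂ) by norm_num,
    show (4:ℂ) = ((4:ℝ):ℂ) by norm_num, ← h, h2]
  norm_num

lemma nonzero_arg {w : ℂ} (hw : ¬(w.re = 0 ∧ Real.sqrt 3 ≤ |w.im|)) : 3 + w ^ 2 ≠ 0 := by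
  intro h
  rcases slit_cond hw with h1 | h1 <;> rw [h] at h1 <;> simp at h1

lemma denom_ne {w : ℂ} (hw : ¬(w.re = 0 ∧ Real.sqrt 3 ≤ |w.im|)) :
    w + 3 + csqrt (3 + w ^ 2) ≠ 0 := by
  intro h
  have hs : csqrt (3 + w ^ 2) ^ 2 = 3 + w ^ 2 := sq_csqrt (nonzero_arg hw)
  have hs2 : csqrt (3 + w ^ 2) = -(w + 3) := by linear_combination h
  have hw1 : w = -1 := by
    have : (-(w+3))^2 = 3 + w^2 := by rw [← hs2]; exact hs
    linear_combination (this) / 6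
  rw [hw1] at hs2
  rw [show (3 + (-1:ℂ)^2) = 4 by norm_num, csqrt_four] at hs2
  norm_num at hs2

noncomputable def gfun (w : ℂ) : ℂ := 2 / (w + 3 + csqrt (3 + w ^ 2))

lemma g_diff : DifferentiableOn ℂ gfun {w : ℂ | ¬(w.re = 0 ∧ Real.sqrt 3 ≤ |w.im|)} := by
  intro w hw
  apply DifferentiableAt.differentiableWithinAt
  have hsq : DifferentiableAt ℂ (fun z : ℂ => csqrt (3 + z ^ 2)) w := by
    have h1 : DifferentiableAt ℂ (fun z : ℂ => z ^ ((1:ℂ)/2)) (3 + w ^ 2) :=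
      HasDerivAt.differentiableAt (HasStrictDerivAt.hasDerivAt
        (Complex.hasStrictDerivAt_cpow_const (c := (1:ℂ)/2) (slit_cond hw)))
    exact h1.comp w (show DifferentiableAt ℂ (fun z : ℂ => 3 + z ^ 2) w by fun_prop)
  apply DifferentiableAt.div (by fun_prop) (by fun_prop)
  exact denom_ne hw

lemma f_eq_g {w : ℂ} (hw : ¬(w.re = 0 ∧ Real.sqrt 3 ≤ |w.im|)) (hne : w ≠ -1) :
    (1 / 3 : ℂ) * ((w + 3 - csqrt (3 + w ^ 2)) / (w + 1)) = gfun w := by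
  have hs : csqrt (3 + w ^ 2) ^ 2 = 3 + w ^ 2 := sq_csqrt (nonzero_arg hw)
  have hd := denom_ne hw
  have h1 : w + 1 ≠ 0 := by
    intro h; apply hne; linear_combination h
  rw [gfun]
  field_simp
  linear_combination -hs

lemma g_neg_one : gfun (-1) = 1/2 := by
  rw [gfun, show (3 + (-1:ℂ)^2) = 4 by norm_num, csqrt_four]
  norm_num

theorem f_analytic_and_limit :
    DifferentiableOn ℂ
      (fun w : ℂ => if w = -1 then (1 / 2 : ℂ)
        else (1 / 3) * ((w + 3 - csqrt (3 + w ^ 2)) / (w + 1)))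
      {w : ℂ | ¬(w.re = 0 ∧ Real.sqrt 3 ≤ |w.im|)} ∧
    Filter.Tendsto (fun w : ℂ => (1 / 3) * ((w + 3 - csqrt (3 + w ^ 2)) / (w + 1)))
      (nhdsWithin (-1) {(-1 : ℂ)}ᶜ) (nhds (1 / 2)) := by
  constructor
  · apply g_diff.congr
    intro w hw
    by_cases h : w = -1
    · simp only [h, if_pos rfl]
      exact g_neg_one.symm
    · rw [if_neg h]
      exact f_eq_g hw h
  · have hD : IsOpen {w : ℂ | ¬(w.re = 0 ∧ Real.sqrt 3 ≤ |w.im|)} := by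
      have : {w : ℂ | ¬(w.re = 0 ∧ Real.sqrt 3 ≤ |w.im|)} =
          (Complex.re ⁻¹' {0} ∩ (fun w : ℂ => |w.im|) ⁻¹' (Set.Ici (Real.sqrt 3)))ᶜ := by
        ext w; simp [Set.mem_setOf_eq]
      rw [this]
      exact (IsClosed.inter (isClosed_singleton.preimage Complex.continuous_re)
        (isClosed_Ici.preimage (continuous_abs.comp Complex.continuous_im))).isOpen_compl
    have hmem : (-1 : ℂ) ∈ {w : ℂ | ¬(w.re = 0 ∧ Real.sqrt 3 ≤ |w.im|)} := by norm_num
    have hcont : ContinuousAt gfun (-1) :=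
      ((g_diff (-1) hmem).differentiableAt (hD.mem_nhds hmem)).continuousAt
    have ht : Filter.Tendsto gfun (nhdsWithin (-1) {(-1 : ℂ)}ᶜ) (nhds (1 / 2)) := by
      rw [← g_neg_one]
      exact hcont.continuousWithinAt.tendsto
    apply ht.congr'
    have h1 : ∀ᶠ w in nhdsWithin (-1 : ℂ) {(-1 : ℂ)}ᶜ,
        w ∈ {w : ℂ | ¬(w.re = 0 ∧ Real.sqrt 3 ≤ |w.im|)} :=
      eventually_nhdsWithin_of_eventually_nhds (hD.eventually_mem hmem)
    have h2 : ∀ᶠ w in nhdsWithin (-1 : ℂ) {(-1 : ℂ)}ᶜ, w ≠ -1 :=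
      eventually_mem_nhdsWithin
    filter_upwards [h1, h2] with w hw hne
    exact (f_eq_g hw hne).symm
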